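/- arXiv:2304.04296 — 4 statements merged into one kernel-verified Lean document; each statement's English description precedes it below -/
import Mathlib

section
/- For every integer k >= 1, the twincut graph G_k is triangle-free. -/
/-- A structured tree: a rooted tree together with, at each internal node,
a graph on its children. A `leaf` is a tree with a single (leaf) node; a
`node ι c g` has children indexed by `ι`, subtrees `c i`, and the graph `g`
on the children. -/
inductive STree : Type 1 where
  | leaf : STree
  | node : (ι : Type) → (ι → STree) → SimpleGraph ι → STree

namespace STree

/-- The type of nodes of a structured tree. -/
def NodeType : STree → Type
  | leaf => PUnit
  | node ι c _ => PUnit ⊕ Σ i : ι, NodeType (c i)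

/-- The type of branches (root-to-leaf paths) of a structured tree. -/
def Branch : STree → Type
  | leaf => PUnit
  | node _ c _ => Σ i, Branch (c i)

/-- The root of a structured tree, as a node. -/
def root : (t : STree) → t.NodeType
  | leaf => PUnit.unit
  | node _ _ _ => Sum.inl PUnit.unit

/-- `onBranch t b u` means that the node `u` lies on the branch `b`. -/
def onBranch : (t : STree) → t.Branch → t.NodeType → Prop
  | leaf, _, _ => True
  | node _ c _, ⟨i, b⟩, u =>
      match u with
      | Sum.inl _ => True
      | Sum.inr ⟨j, w⟩ => ∃ h : j = i, onBranch (c i) b (h ▸ w)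

/-- Adjacency between tree nodes in the realization: the union of the edges
of the graphs `g(v)` placed on the children of each internal node `v`
(tree edges are *not* included). -/
def treeAdj : (t : STree) → t.NodeType → t.NodeType → Prop
  | leaf, _, _ => False
  | node ι c g, u, v =>
      match u, v with
      | Sum.inr ⟨i, u'⟩, Sum.inr ⟨j, v'⟩ =>
          (∃ h : i = j, treeAdj (c j) (h ▸ u') v') ∨
          (g.Adj i j ∧ u' = root (c i) ∧ v' = root (c j))
      | _, _ => False

/-- The realization `R(T,g)` of a structured tree: its vertices are the tree
nodes together with the branches; edges are those of the graphs `g(v)`, plus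
an edge from each branch vertex to every tree node lying on that branch. -/
def realization (t : STree) : SimpleGraph (t.NodeType ⊕ t.Branch) :=
  SimpleGraph.fromRel (fun x y =>
    match x, y with
    | Sum.inl u, Sum.inl v => treeAdj t u v
    | Sum.inl u, Sum.inr b => onBranch t b u
    | Sum.inr b, Sum.inl u => onBranch t b u
    | Sum.inr _, Sum.inr _ => False)

/-- The level of a node (the root is at level 1). -/
def level : (t : STree) → t.NodeType → ℕ
  | leaf, _ => 1
  | node _ c _, u =>
      match u with
      | Sum.inl _ => 1
      | Sum.inr ⟨i, w⟩ => level (c i) w + 1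

/-- `IsInternalGraphOf t ⟨ι, g⟩` means that `g` is the graph attached to some
internal node of `t` (on its children, indexed by `ι`). -/
inductive IsInternalGraphOf : STree → (Σ ι : Type, SimpleGraph ι) → Prop where
  | here : ∀ (ι : Type) (c : ι → STree) (g : SimpleGraph ι),
      IsInternalGraphOf (node ι c g) ⟨ι, g⟩
  | child : ∀ (ι : Type) (c : ι → STree) (g : SimpleGraph ι) (i : ι) (p),
      IsInternalGraphOf (c i) p → IsInternalGraphOf (node ι c g) p

end STree

/-- Builds the structured tree in which all nodes at level `i` carry the
`i`-th graph of the list on their children (so the tree has `L.length + 1`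
levels). -/
def buildTree : List (Σ V : Type, SimpleGraph V) → STree
  | [] => .leaf
  | ⟨ι, g⟩ :: rest => .node ι (fun _ => buildTree rest) g

/-- The realization of a structured tree, packaged with its vertex type. -/
def realizationSigma (t : STree) : Σ V : Type, SimpleGraph V :=
  ⟨t.NodeType ⊕ t.Branch, t.realization⟩

/-- `twincutList m` is the list `[G₂, G₃, …, G_{m+1}]` of twincut graphs. -/
def twincutList : ℕ → List (Σ V : Type, SimpleGraph V)
  | 0 => []
  | m + 1 => twincutList m ++ [realizationSigma (buildTree (twincutList m))]

/-- The structured tree `T_{m+2}` whose realization is the twincut graph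
`G_{m+2}`: it has `m + 1` levels, and every node at level `i ≤ m` carries
the graph `G_{i+1}` on its children. -/
def twincutTree (m : ℕ) : STree := buildTree (twincutList m)

/-- The twincut graphs: `G 1` is the one-vertex graph, and for `k ≥ 2`,
`G k` is the realization of the structured tree `T_k`. -/
def twincutG : ℕ → Σ V : Type, SimpleGraph V
  | 0 => ⟨PUnit, ⊥⟩
  | 1 => ⟨PUnit, ⊥⟩
  | (m + 2) => realizationSigma (twincutTree m)


/-! ### Auxiliary lemmas -/

/-- No triangle, as a plain predicate. -/
def NoTri {V : Type} (g : SimpleGraph V) : Prop :=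
  ∀ a b c, g.Adj a b → g.Adj a c → g.Adj b c → False

lemma cliqueFree_of_noTri {V : Type} {g : SimpleGraph V} (h : NoTri g) :
    g.CliqueFree 3 := by
  classical
  intro s hs
  rw [SimpleGraph.is3Clique_iff] at hs
  obtain ⟨a, b, c, hab, hac, hbc, -⟩ := hs
  exact h a b c hab hac hbc

lemma noTri_of_cliqueFree {V : Type} {g : SimpleGraph V} (h : g.CliqueFree 3) :
    NoTri g := by
  classical
  intro a b c hab hac hbc
  exact h {a, b, c} (SimpleGraph.is3Clique_triple_iff.2 ⟨hab, hac, hbc⟩)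

namespace STree

lemma treeAdj_root_left : ∀ (t : STree) (v : t.NodeType), ¬ treeAdj t (root t) v := by
  intro t v
  cases t with
  | leaf => exact id
  | node ι c g => cases v <;> exact id

lemma treeAdj_root_right : ∀ (t : STree) (v : t.NodeType), ¬ treeAdj t v (root t) := by
  intro t v
  cases t with
  | leaf => exact id
  | node ι c g => cases v <;> exact id

lemma treeAdj_symm : ∀ (t : STree) (u v : t.NodeType), treeAdj t u v → treeAdj t v u := by
  intro t
  induction t with
  | leaf => intro u v h; exact h.elim
  | node ι c g ih =>
    rintro (u | ⟨i, u'⟩) (v | ⟨j, v'⟩) h <;> try exact h.elim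
    rcases h with ⟨rfl, ht⟩ | ⟨hg, hu, hv⟩
    · exact Or.inl ⟨rfl, ih _ _ _ ht⟩
    · exact Or.inr ⟨hg.symm, hv, hu⟩

lemma not_onBranch_both : ∀ (t : STree) (b : t.Branch) (u v : t.NodeType),
    treeAdj t u v → onBranch t b u → onBranch t b v → False := by
  intro t
  induction t with
  | leaf => intro b u v h; exact h.elim
  | node ι c g ih =>
    rintro ⟨l, b'⟩ (u | ⟨i, u'⟩) (v | ⟨j, v'⟩) h hu hv <;> try exact h.elim
    obtain ⟨rfl, hbu⟩ := hu
    obtain ⟨rfl, hbv⟩ := hv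
    rcases h with ⟨h, ht⟩ | ⟨hg, -, -⟩
    · exact ih _ b' u' v' ht hbu hbv
    · exact g.irrefl hg

/-- All graphs attached at internal nodes are triangle-free. -/
def AllTF : STree → Prop
  | .leaf => True
  | .node _ c g => NoTri g ∧ ∀ i, AllTF (c i)

lemma treeAdj_noTri : ∀ (t : STree), AllTF t →
    ∀ u v w, treeAdj t u v → treeAdj t u w → treeAdj t v w → False := by
  intro t
  induction t with
  | leaf => intro _ u v w h; exact h.elim
  | node ι c g ih =>
    rintro ⟨hg, hc⟩ (u | ⟨i, u'⟩) (v | ⟨j, v'⟩) (w | ⟨k, w'⟩) huv huw hvw <;>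
      try exact huv.elim
    case _ => exact huw.elim
    rcases huv with ⟨h1, huv⟩ | ⟨g1, hru, hrv⟩
    · subst h1
      rcases huw with ⟨h2, huw⟩ | ⟨g2, hru, hrw⟩
      · subst h2
        rcases hvw with ⟨h3, hvw⟩ | ⟨g3, hrv, hrw⟩
        · exact ih i (hc i) u' v' w' huv huw hvw
        · exact g.irrefl g3
      · subst hru
        exact treeAdj_root_left _ _ huv
    · subst hru; subst hrv
      rcases huw with ⟨h2, huw⟩ | ⟨g2, hru, hrw⟩
      · subst h2
        exact treeAdj_root_left _ _ huw
      · rcases hvw with ⟨h3, hvw⟩ | ⟨g3, hrv, hrw⟩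
        · subst h3
          exact treeAdj_root_left _ _ hvw
        · exact hg i j k g1 g2 g3

lemma realization_cliqueFree (t : STree) (h : AllTF t) :
    t.realization.CliqueFree 3 := by
  apply cliqueFree_of_noTri
  intro x y z hxy hxz hyz
  rw [realization, SimpleGraph.fromRel_adj] at hxy hxz hyz
  rcases x with u | b <;> rcases y with v | b' <;> rcases z with w | b'' <;>
    [skip; skip; skip; skip; skip; skip; skip; exact hyz.2.elim (fun h => h) fun h => h]
  · -- three nodes
    have huv := hxy.2.elim id (treeAdj_symm t v u)
    have huw := hxz.2.elim id (treeAdj_symm t w u)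
    have hvw := hyz.2.elim id (treeAdj_symm t w v)
    exact treeAdj_noTri t h u v w huv huw hvw
  · -- u, v nodes, b'' branch
    have huv := hxy.2.elim id (treeAdj_symm t v u)
    have hbu : onBranch t b'' u := hxz.2.elim id id
    have hbv : onBranch t b'' v := hyz.2.elim id id
    exact not_onBranch_both t b'' u v huv hbu hbv
  · -- u, b', w
    have huw := hxz.2.elim id (treeAdj_symm t w u)
    have hbu : onBranch t b' u := hxy.2.elim id id
    have hbw : onBranch t b' w := hyz.2.elim id id
    exact not_onBranch_both t b' u w huw hbu hbw
  · exact hyz.2.elim (fun h => h) fun h => h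
  · -- b, v, w
    have hvw := hyz.2.elim id (treeAdj_symm t w v)
    have hbv : onBranch t b v := hxy.2.elim id id
    have hbw : onBranch t b w := hxz.2.elim id id
    exact not_onBranch_both t b v w hvw hbv hbw
  · exact hxz.2.elim (fun h => h) fun h => h
  · exact hxy.2.elim (fun h => h) fun h => h

end STree

lemma allTF_buildTree : ∀ (L : List (Σ V : Type, SimpleGraph V)),
    (∀ p ∈ L, NoTri p.2) → STree.AllTF (buildTree L)
  | [], _ => trivial
  | ⟨ι, g⟩ :: rest, h =>
    ⟨h ⟨ι, g⟩ (by simp), fun _ => allTF_buildTree rest fun p hp => h p (by simp [hp])⟩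

lemma twincutList_noTri : ∀ m, ∀ p ∈ twincutList m, NoTri p.2 := by
  intro m
  induction m with
  | zero => simp [twincutList]
  | succ n ih =>
    intro p hp
    simp only [twincutList, List.mem_append, List.mem_singleton] at hp
    rcases hp with hp | rfl
    · exact ih p hp
    · exact noTri_of_cliqueFree
        (STree.realization_cliqueFree _ (allTF_buildTree _ ih))


/-- every twincut graph is triangle-free. -/
theorem twincut_triangleFree (k : ℕ) (hk : 1 ≤ k) :
    (twincutG k).2.CliqueFree 3 := by
  match k, hk with
  | 1, _ =>
    exact SimpleGraph.cliqueFree_bot (by norm_num)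
  | (m + 2), _ =>
    exact STree.realization_cliqueFree _ (allTF_buildTree _ (twincutList_noTri m))
end

section
/- For every integer k >= 1, the chromatic number of the twincut graph G_k equals k. -/
open STree in
lemma exists_nodeColoring (n : ℕ) :
    ∀ (L : List (Σ V : Type, SimpleGraph V)), (∀ p ∈ L, p.2.Colorable n) →
    ∀ a : Fin n, ∃ f : (buildTree L).NodeType → Fin n,
      f (buildTree L).root = a ∧
      ∀ u v, treeAdj (buildTree L) u v → f u ≠ f v := by
  intro L
  induction L with
  | nil =>
      intro _ a
      exact ⟨fun _ => a, rfl, fun u v h => h.elim⟩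
  | cons p rest ih =>
      obtain ⟨ι, g⟩ := p
      intro hcol a
      obtain ⟨cg⟩ := hcol ⟨ι, g⟩ List.mem_cons_self
      have ih' := ih (fun q hq => hcol q (List.mem_cons_of_mem _ hq))
      choose F hF1 hF2 using ih'
      refine ⟨fun u => match u with
        | Sum.inl _ => a
        | Sum.inr ⟨i, w⟩ => F (cg i) w, rfl, ?_⟩
      rintro (u | ⟨i, u'⟩) (v | ⟨j, v'⟩) hadj <;> try exact hadj.elim
      rcases hadj with ⟨h, hadj⟩ | ⟨hgadj, hu, hv⟩
      · subst h
        exact fun he => hF2 (cg i) _ _ hadj he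
      · subst hu; subst hv
        simp only [hF1]
        exact cg.valid hgadj

open STree in
lemma exists_rainbow_branch {α : Type} [DecidableEq α] :
    ∀ (L : List (Σ V : Type, SimpleGraph V)) (c : (buildTree L).NodeType → α),
      (∀ u v, treeAdj (buildTree L) u v → u ≠ v → c u ≠ c v) →
      ∀ (S : Finset α), c (buildTree L).root ∉ S →
      (∀ (i : ℕ) (h : i < L.length), ¬ (L.get ⟨i, h⟩).2.Colorable (S.card + i + 1)) →
      ∃ (b : (buildTree L).Branch) (T : Finset α),
        S ⊆ T ∧ T.card = S.card + L.length + 1 ∧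
        ∀ x ∈ T, x ∈ S ∨ ∃ u, onBranch (buildTree L) b u ∧ c u = x := by
  intro L
  induction L with
  | nil =>
      intro c hc S hroot hcol
      refine ⟨PUnit.unit, insert (c (buildTree []).root) S, Finset.subset_insert _ _, ?_, ?_⟩
      · simp [Finset.card_insert_of_notMem hroot]
      · intro x hx
        rcases Finset.mem_insert.1 hx with h | h
        · exact Or.inr ⟨(buildTree []).root, trivial, h.symm⟩
        · exact Or.inl h
  | cons p rest ih =>
      obtain ⟨ι, g⟩ := p
      intro c hc S hroot hcol
      have hS'card : (insert (c (Sum.inl PUnit.unit)) S).card = S.card + 1 :=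
        Finset.card_insert_of_notMem hroot
      have hex : ∃ i : ι,
          c (Sum.inr ⟨i, (buildTree rest).root⟩) ∉ insert (c (Sum.inl PUnit.unit)) S := by
        by_contra hall
        push_neg at hall
        have C : g.Coloring ↥(insert (c (Sum.inl PUnit.unit)) S) := SimpleGraph.Coloring.mk
          (fun i => ⟨c (Sum.inr ⟨i, (buildTree rest).root⟩), hall i⟩)
          (by
            intro i j hij
            simp only [ne_eq, Subtype.mk.injEq]
            refine hc (Sum.inr ⟨i, (buildTree rest).root⟩) (Sum.inr ⟨j, (buildTree rest).root⟩)
              (Or.inr ⟨hij, rfl, rfl⟩) ?_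
            intro he
            injection he with h1
            injection h1 with h2 h3
            exact hij.ne h2)
        have hco := C.colorable
        rw [Fintype.card_coe, hS'card] at hco
        exact hcol 0 (by simp) hco
      obtain ⟨i, hi⟩ := hex
      have hc' : ∀ u v, treeAdj (buildTree rest) u v → u ≠ v →
          c (Sum.inr ⟨i, u⟩) ≠ c (Sum.inr ⟨i, v⟩) := by
        intro u v huv hne
        refine hc (Sum.inr ⟨i, u⟩) (Sum.inr ⟨i, v⟩) (Or.inl ⟨rfl, huv⟩) ?_
        intro he
        injection he with h1
        injection h1 with h2 h3
        exact hne h3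
      have hcol' : ∀ (j : ℕ) (h : j < rest.length),
          ¬ (rest.get ⟨j, h⟩).2.Colorable
            ((insert (c (Sum.inl PUnit.unit)) S).card + j + 1) := by
        intro j h
        have h2 := hcol (j+1) (by simpa using Nat.succ_lt_succ h)
        have harith : (insert (c (Sum.inl PUnit.unit)) S).card + j + 1
            = S.card + (j+1) + 1 := by omega
        rw [harith]
        exact h2
      obtain ⟨b', T, hST, hTcard, hT⟩ :=
        ih (fun u => c (Sum.inr ⟨i, u⟩)) hc' (insert (c (Sum.inl PUnit.unit)) S) hi hcol'
      refine ⟨⟨i, b'⟩, T, le_trans (Finset.subset_insert _ _) hST, ?_, ?_⟩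
      · rw [hTcard, hS'card, List.length_cons]; omega
      · intro x hx
        rcases hT x hx with hxS' | ⟨u, hub, hcu⟩
        · rcases Finset.mem_insert.1 hxS' with h | h
          · exact Or.inr ⟨Sum.inl PUnit.unit, trivial, h.symm⟩
          · exact Or.inl h
        · exact Or.inr ⟨Sum.inr ⟨i, u⟩, ⟨rfl, hub⟩, hcu⟩

lemma twincutList_length (m : ℕ) : (twincutList m).length = m := by
  induction m with
  | zero => rfl
  | succ m ih => simp [twincutList, ih]

lemma twincutList_eq (m : ℕ) :
    twincutList m = (List.range m).map (fun i => twincutG (i + 2)) := by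
  induction m with
  | zero => rfl
  | succ m ih =>
      rw [twincutList, List.range_succ, List.map_append]
      congr 1

lemma twincutList_get (m i : ℕ) (h : i < (twincutList m).length) :
    (twincutList m).get ⟨i, h⟩ = twincutG (i + 2) := by
  have h' : i < m := by rwa [twincutList_length] at h
  simp [List.get_eq_getElem, twincutList_eq, h']


open STree

/-- the chromatic number of the twincut graph `G_k` is `k`. -/
theorem twincut_chromaticNumber (k : ℕ) (hk : 1 ≤ k) :
    (twincutG k).2.chromaticNumber = k := by
  induction k using Nat.strong_induction_on with
  | _ k ih =>
  cases k with
  | zero => omega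
  | succ k =>
    cases k with
    | zero =>
        show (⊥ : SimpleGraph PUnit).chromaticNumber = 1
        rw [SimpleGraph.chromaticNumber_bot]
    | succ m =>
        show (realization (buildTree (twincutList m))).chromaticNumber = ((m + 2 : ℕ) : ℕ∞)
        have hLi : ∀ (i : ℕ) (h : i < (twincutList m).length),
            ((twincutList m).get ⟨i, h⟩).2.chromaticNumber = ((i + 2 : ℕ) : ℕ∞) := by
          intro i h
          rw [twincutList_get]
          exact ih (i + 2) (by have := h; rw [twincutList_length] at this; omega) (by omega)
        have hupper : (realization (buildTree (twincutList m))).Colorable (m + 2) := by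
          have hcols : ∀ p ∈ twincutList m, p.2.Colorable (m + 1) := by
            intro p hp
            obtain ⟨⟨i, h⟩, rfl⟩ := List.mem_iff_get.1 hp
            have h' : i < m := by rwa [twincutList_length] at h
            have hc2 := SimpleGraph.chromaticNumber_le_iff_colorable.1 (le_of_eq (hLi i h))
            exact hc2.mono (by omega)
          obtain ⟨f, hfroot, hf⟩ := exists_nodeColoring (m + 1) (twincutList m) hcols 0
          have C : (realization (buildTree (twincutList m))).Coloring (Fin (m + 2)) := by
            refine SimpleGraph.Coloring.mk
              (Sum.elim (fun u => (f u).castSucc) (fun _ => Fin.last (m + 1))) ?_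
            rintro (u | b) (v | b') hadj <;>
              rw [realization, SimpleGraph.fromRel_adj] at hadj
            · rcases hadj.2 with h | h
              · exact fun he => hf u v h (Fin.castSucc_injective _ he)
              · exact fun he => hf v u h (Fin.castSucc_injective _ he).symm
            · exact (Fin.castSucc_lt_last (f u)).ne
            · exact (Fin.castSucc_lt_last (f v)).ne'
            · exact absurd hadj.2 (by simp)
          have hco := C.colorable
          rwa [Fintype.card_fin] at hco
        have hlower : ¬ (realization (buildTree (twincutList m))).Colorable (m + 1) := by
          rintro ⟨C⟩
          have hc : ∀ u v, treeAdj (buildTree (twincutList m)) u v → u ≠ v →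
              C (Sum.inl u) ≠ C (Sum.inl v) := by
            intro u v hadj hne
            apply C.valid
            rw [realization, SimpleGraph.fromRel_adj]
            exact ⟨by simpa using hne, Or.inl hadj⟩
          obtain ⟨b, T, -, hTcard, hT⟩ :=
            exists_rainbow_branch (twincutList m) (fun u => C (Sum.inl u)) hc ∅ (by simp)
              (by
                intro i h hco
                have h2 := SimpleGraph.chromaticNumber_le_iff_colorable.2 hco
                rw [hLi i h] at h2
                have h3 : i + 2 ≤ Finset.card (∅ : Finset (Fin (m+1))) + i + 1 := by
                  exact_mod_cast h2
                simp at h3)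
          have hTuniv : T = Finset.univ := by
            apply Finset.eq_univ_of_card
            rw [hTcard, twincutList_length]
            simp
          have hmem : C (Sum.inr b) ∈ T := by rw [hTuniv]; exact Finset.mem_univ _
          rcases hT _ hmem with h | ⟨u, hub, hcu⟩
          · simp at h
          · refine C.valid ?_ hcu.symm
            rw [realization, SimpleGraph.fromRel_adj]
            exact ⟨by simp, Or.inl hub⟩
        refine le_antisymm (SimpleGraph.chromaticNumber_le_iff_colorable.2 hupper) ?_
        by_contra h
        push_neg at h
        have hne : (realization (buildTree (twincutList m))).chromaticNumber ≠ ⊤ := h.ne_top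
        lift (realization (buildTree (twincutList m))).chromaticNumber to ℕ using hne with n hn
        have hlt : n < m + 2 := by exact_mod_cast h
        have hle : (realization (buildTree (twincutList m))).chromaticNumber ≤ ((m + 1 : ℕ) : ℕ∞) := by
          rw [← hn]
          exact_mod_cast Nat.lt_succ_iff.mp hlt
        exact hlower (SimpleGraph.chromaticNumber_le_iff_colorable.1 hle)
end

section
/- For every integer k >= 1, the twincut graph G_k is k-colorable. -/
namespace TwincutProof

open STree

/-- A family of colorings for the graphs in a list. -/
def ColorData : List (Σ V : Type, SimpleGraph V) → Type
  | [] => PUnit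
  | p :: rest => (p.1 → ℕ) × ColorData rest

/-- The coloring of the nodes of `buildTree L` induced by a `ColorData`,
with the root receiving color `base`. -/
def nodeColor : (L : List (Σ V : Type, SimpleGraph V)) → ColorData L → ℕ →
    (buildTree L).NodeType → ℕ
  | [], _, base, _ => base
  | _ :: rest, cd, base, u =>
    match u with
    | Sum.inl _ => base
    | Sum.inr ⟨i, w⟩ => nodeColor rest cd.2 (cd.1 i) w

/-- The color data is proper and bounded: the coloring at depth `d` is a
proper coloring using fewer than `n + d` colors. -/
def Good : (L : List (Σ V : Type, SimpleGraph V)) → ColorData L → ℕ → Prop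
  | [], _, _ => True
  | p :: rest, cd, n =>
      (∀ i j, p.2.Adj i j → cd.1 i ≠ cd.1 j) ∧ (∀ i, cd.1 i < n) ∧
        Good rest cd.2 (n + 1)

lemma nodeColor_root : ∀ (L : List (Σ V : Type, SimpleGraph V)) (cd : ColorData L)
    (base : ℕ), nodeColor L cd base (root (buildTree L)) = base
  | [], _, _ => rfl
  | _ :: _, _, _ => rfl

lemma nodeColor_lt : ∀ (L : List (Σ V : Type, SimpleGraph V)) (cd : ColorData L)
    (n base K : ℕ), Good L cd n → base < K → n + L.length ≤ K + 1 →
    ∀ u, nodeColor L cd base u < K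
  | [], _, _, _, _, _, hb, _, _ => hb
  | p :: rest, cd, n, base, K, hg, hb, hK, u => by
    match u with
    | Sum.inl _ => exact hb
    | Sum.inr ⟨i, w⟩ =>
      have hn : n ≤ K := by
        have := hK
        simp only [List.length_cons] at this
        omega
      exact nodeColor_lt rest cd.2 (n + 1) (cd.1 i) K hg.2.2
        (lt_of_lt_of_le (hg.2.1 i) hn) (by simp at hK ⊢; omega) w

lemma nodeColor_proper : ∀ (L : List (Σ V : Type, SimpleGraph V)) (cd : ColorData L)
    (n base : ℕ), Good L cd n → ∀ u v, treeAdj (buildTree L) u v →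
    nodeColor L cd base u ≠ nodeColor L cd base v
  | [], _, _, _, _, _, _, h => h.elim
  | p :: rest, cd, n, base, hg, u, v, h => by
    match u, v with
    | Sum.inl _, Sum.inl _ => exact h.elim
    | Sum.inl _, Sum.inr _ => exact h.elim
    | Sum.inr _, Sum.inl _ => exact h.elim
    | Sum.inr ⟨i, u'⟩, Sum.inr ⟨j, v'⟩ =>
      rcases h with ⟨rfl, hadj⟩ | ⟨hij, hu, hv⟩
      · exact nodeColor_proper rest cd.2 (n + 1) (cd.1 i) hg.2.2 _ _ hadj
      · subst hu; subst hv
        simpa [nodeColor, nodeColor_root] using hg.1 i j hij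

lemma existsGood : ∀ (L : List (Σ V : Type, SimpleGraph V)) (n : ℕ),
    (∀ d (h : d < L.length), ∃ f : (L.get ⟨d, h⟩).1 → ℕ,
      (∀ a b, (L.get ⟨d, h⟩).2.Adj a b → f a ≠ f b) ∧ ∀ a, f a < n + d) →
    ∃ cd : ColorData L, Good L cd n
  | [], n, _ => ⟨PUnit.unit, trivial⟩
  | p :: rest, n, H => by
    obtain ⟨f, hf1, hf2⟩ := H 0 (by simp)
    obtain ⟨cd, hcd⟩ := existsGood rest (n + 1) (fun d h => by
      obtain ⟨g, hg1, hg2⟩ := H (d + 1) (by simpa using Nat.succ_lt_succ h)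
      exact ⟨g, hg1, fun a => by have := hg2 a; omega⟩)
    exact ⟨⟨f, cd⟩, hf1, fun i => by simpa using hf2 i, hcd⟩

lemma twincutList_length (m : ℕ) : (twincutList m).length = m := by
  induction m with
  | zero => rfl
  | succ m ih => simp [twincutList, ih]

lemma twincutList_get (m : ℕ) : ∀ d (h : d < (twincutList m).length),
    (twincutList m).get ⟨d, h⟩ = realizationSigma (buildTree (twincutList d)) := by
  induction m with
  | zero => intro d h; simp [twincutList] at h
  | succ m ih =>
    intro d h
    have hlen := twincutList_length m
    rcases lt_or_ge d m with hd | hd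
    · simp only [twincutList, List.get_eq_getElem,
        List.getElem_append_left (show d < (twincutList m).length by omega)]
      exact ih d (by omega)
    · have hdm : d = m := by
        have := twincutList_length (m + 1)
        omega
      subst hdm
      simp only [twincutList, List.get_eq_getElem,
        List.getElem_append_right (show (twincutList d).length ≤ d by omega)]
      simp [hlen]

lemma key : ∀ m : ℕ, ∃ f : ((buildTree (twincutList m)).NodeType ⊕
      (buildTree (twincutList m)).Branch) → ℕ,
    (∀ u v, (realization (buildTree (twincutList m))).Adj u v → f u ≠ f v) ∧
      ∀ x, f x < m + 2 := by
  intro m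
  induction m using Nat.strong_induction_on with
  | _ m ih =>
    have H : ∀ d (h : d < (twincutList m).length),
        ∃ f : ((twincutList m).get ⟨d, h⟩).1 → ℕ,
          (∀ a b, ((twincutList m).get ⟨d, h⟩).2.Adj a b → f a ≠ f b) ∧
            ∀ a, f a < 2 + d := by
      intro d h
      have hdm : d < m := by rw [twincutList_length] at h; exact h
      obtain ⟨f, hf1, hf2⟩ := ih d hdm
      rw [twincutList_get m d h]
      exact ⟨f, hf1, fun a => by have := hf2 a; omega⟩
    obtain ⟨cd, hcd⟩ := existsGood (twincutList m) 2 H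
    refine ⟨Sum.elim (nodeColor (twincutList m) cd 0) (fun _ => m + 1), ?_, ?_⟩
    · intro u v huv
      rw [realization, SimpleGraph.fromRel_adj] at huv
      obtain ⟨hne, hrel⟩ := huv
      have hnlt : ∀ w, nodeColor (twincutList m) cd 0 w < m + 1 := by
        intro w
        exact nodeColor_lt (twincutList m) cd 2 0 (m + 1) hcd (by omega)
          (by rw [twincutList_length]; omega) w
      match u, v with
      | Sum.inl a, Sum.inl b =>
        rcases hrel with hr | hr
        · exact nodeColor_proper (twincutList m) cd 2 0 hcd a b hr
        · exact (nodeColor_proper (twincutList m) cd 2 0 hcd b a hr).symm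
      | Sum.inl a, Sum.inr b => exact Nat.ne_of_lt (hnlt a)
      | Sum.inr b, Sum.inl a => exact Nat.ne_of_gt (hnlt a)
      | Sum.inr a, Sum.inr b => rcases hrel with hr | hr <;> exact hr.elim
    · intro x
      match x with
      | Sum.inl a =>
        exact lt_trans (nodeColor_lt (twincutList m) cd 2 0 (m + 1) hcd (by omega)
          (by rw [twincutList_length]; omega) a) (by omega)
      | Sum.inr b => simp

end TwincutProof

/-- the twincut graph `G_k` is `k`-colorable. -/
theorem twincut_colorable (k : ℕ) (hk : 1 ≤ k) :
    (twincutG k).2.Colorable k := by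
  match k, hk with
  | 1, _ =>
    exact ⟨SimpleGraph.Coloring.mk (fun _ => (0 : Fin 1)) (fun h => h.elim)⟩
  | (m + 2), _ =>
    obtain ⟨f, hf1, hf2⟩ := TwincutProof.key m
    exact ⟨SimpleGraph.Coloring.mk (fun x => (⟨f x, hf2 x⟩ : Fin (m + 2)))
      (fun h => by simpa [Fin.ext_iff] using hf1 _ _ h)⟩
end

section
/- Let C be the smallest class of graphs containing all graphs on at most two vertices and closed under vertex replication (adding a non-adjacent twin) and gluing along an independent set of size at most two. If (T,g) is a structured tree such that g(v) is in C for every internal node v, then the realization R(T,g) is in C. -/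
/-- Vertex replication: add a new vertex (a non-adjacent twin of `v`) with the
same neighborhood as `v`, non-adjacent to `v`. Equivalently, substitute `v`
by an independent set of size two. -/
def replicateGraph {V : Type} (G : SimpleGraph V) (v : V) : SimpleGraph (V ⊕ Unit) :=
  SimpleGraph.fromRel (fun x y =>
    match x, y with
    | Sum.inl a, Sum.inl b => G.Adj a b
    | Sum.inl a, Sum.inr _ => G.Adj a v
    | Sum.inr _, Sum.inl b => G.Adj v b
    | Sum.inr _, Sum.inr _ => False)

/-- Gluing the graphs `G` and `H` along the set `S`, embedded in `G` via `f`
and in `H` via `h`: the two copies of `S` are identified. -/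
def glueGraphs {V W S : Type} (G : SimpleGraph V) (H : SimpleGraph W)
    (f : S → V) (h : S → W) : SimpleGraph (V ⊕ {w : W // w ∉ Set.range h}) :=
  SimpleGraph.fromRel (fun x y =>
    match x, y with
    | Sum.inl a, Sum.inl b => G.Adj a b
    | Sum.inl a, Sum.inr w => ∃ s, f s = a ∧ H.Adj (h s) w.val
    | Sum.inr w, Sum.inl a => ∃ s, f s = a ∧ H.Adj (h s) w.val
    | Sum.inr w, Sum.inr w' => H.Adj w.val w'.val)

/-- The class `𝒞`: the smallest class of graphs (closed under isomorphism)
containing all graphs on at most two vertices, closed under vertex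
replication (adding a non-adjacent twin) and under gluing two of its members
along an independent set of size at most two. -/
inductive InC : ∀ V : Type, SimpleGraph V → Prop where
  | small (V : Type) (G : SimpleGraph V) : Finite V → Nat.card V ≤ 2 → InC V G
  | iso (V W : Type) (G : SimpleGraph V) (H : SimpleGraph W) :
      InC V G → Nonempty (G ≃g H) → InC W H
  | replicate (V : Type) (G : SimpleGraph V) (v : V) :
      InC V G → InC (V ⊕ Unit) (replicateGraph G v)
  | glue (V W S : Type) (G : SimpleGraph V) (H : SimpleGraph W) (f : S → V) (h : S → W) :
      InC V G → InC W H → Function.Injective f → Function.Injective h →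
      Finite S → Nat.card S ≤ 2 →
      (∀ s s' : S, ¬ G.Adj (f s) (f s')) → (∀ s s' : S, ¬ H.Adj (h s) (h s')) →
      InC (V ⊕ {w : W // w ∉ Set.range h}) (glueGraphs G H f h)

/-- `G` has a pair of non-adjacent twins: two distinct non-adjacent vertices
with the same neighborhood. -/
def HasNonadjTwins {V : Type} (G : SimpleGraph V) : Prop :=
  ∃ u v : V, u ≠ v ∧ ¬ G.Adj u v ∧ ∀ w, G.Adj u w ↔ G.Adj v w

/-- `G` has a vertex cutset which is an independent set of size at most two:
a set `S` of at most two pairwise non-adjacent vertices whose removal leaves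
a disconnected graph. -/
def HasSmallIndepCutset {V : Type} (G : SimpleGraph V) : Prop :=
  ∃ S : Set V, S.ncard ≤ 2 ∧ (∀ a ∈ S, ∀ b ∈ S, ¬ G.Adj a b) ∧
    ¬ (G.induce Sᶜ).Connected

/-! ### Auxiliary material for Statement 9 -/

open SimpleGraph

section Basics

lemma InC_finite {V : Type} {G : SimpleGraph V} (h : InC V G) : Finite V := by
  induction h with
  | small V G hfin _ => exact hfin
  | iso V W G H _ hne ih =>
      obtain ⟨e⟩ := hne
      exact Finite.of_equiv V e.toEquiv
  | replicate V G v _ ih => haveI := ih; infer_instance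
  | glue V W S G H f h _ _ _ _ _ _ _ _ ihG ihH => haveI := ihG; haveI := ihH; infer_instance

@[simp] lemma repl_adj_inl_inl {V : Type} {G : SimpleGraph V} {v a b} :
    (replicateGraph G v).Adj (Sum.inl a) (Sum.inl b) ↔ G.Adj a b := by
  constructor
  · rintro ⟨_, h | h⟩
    · exact h
    · exact h.symm
  · intro h
    exact ⟨fun he => G.ne_of_adj h (Sum.inl.inj he), Or.inl h⟩

@[simp] lemma repl_adj_inl_inr {V : Type} {G : SimpleGraph V} {v a} {u : Unit} :
    (replicateGraph G v).Adj (Sum.inl a) (Sum.inr u) ↔ G.Adj a v := by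
  constructor
  · rintro ⟨_, h | h⟩
    · exact h
    · exact h.symm
  · intro h
    exact ⟨(fun he => by cases he), Or.inl h⟩

@[simp] lemma repl_adj_inr_inl {V : Type} {G : SimpleGraph V} {v b} {u : Unit} :
    (replicateGraph G v).Adj (Sum.inr u) (Sum.inl b) ↔ G.Adj v b := by
  constructor
  · rintro ⟨_, h | h⟩
    · exact h
    · exact h.symm
  · intro h
    exact ⟨(fun he => by cases he), Or.inl h⟩

@[simp] lemma repl_adj_inr_inr {V : Type} {G : SimpleGraph V} {v} {u u' : Unit} :
    ¬ (replicateGraph G v).Adj (Sum.inr u) (Sum.inr u') := by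
  rintro ⟨_, h | h⟩ <;> exact h

@[simp] lemma glue_adj_inl_inl {V W S : Type} {G : SimpleGraph V} {H : SimpleGraph W}
    {f : S → V} {h : S → W} {a b : V} :
    (glueGraphs G H f h).Adj (Sum.inl a) (Sum.inl b) ↔ G.Adj a b := by
  constructor
  · rintro ⟨_, hh | hh⟩
    · exact hh
    · exact hh.symm
  · intro hh
    exact ⟨fun he => G.ne_of_adj hh (Sum.inl.inj he), Or.inl hh⟩

@[simp] lemma glue_adj_inl_inr {V W S : Type} {G : SimpleGraph V} {H : SimpleGraph W}
    {f : S → V} {h : S → W} {a : V} {w : {w : W // w ∉ Set.range h}} :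
    (glueGraphs G H f h).Adj (Sum.inl a) (Sum.inr w) ↔ ∃ s, f s = a ∧ H.Adj (h s) w.val := by
  constructor
  · rintro ⟨_, hh | hh⟩
    · exact hh
    · exact hh
  · intro hh
    exact ⟨(fun he => by cases he), Or.inl hh⟩

@[simp] lemma glue_adj_inr_inl {V W S : Type} {G : SimpleGraph V} {H : SimpleGraph W}
    {f : S → V} {h : S → W} {a : V} {w : {w : W // w ∉ Set.range h}} :
    (glueGraphs G H f h).Adj (Sum.inr w) (Sum.inl a) ↔ ∃ s, f s = a ∧ H.Adj (h s) w.val := by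
  constructor
  · rintro ⟨_, hh | hh⟩
    · exact hh
    · exact hh
  · intro hh
    exact ⟨(fun he => by cases he), Or.inl hh⟩

@[simp] lemma glue_adj_inr_inr {V W S : Type} {G : SimpleGraph V} {H : SimpleGraph W}
    {f : S → V} {h : S → W} {w w' : {w : W // w ∉ Set.range h}} :
    (glueGraphs G H f h).Adj (Sum.inr w) (Sum.inr w') ↔ H.Adj w.val w'.val := by
  constructor
  · rintro ⟨_, hh | hh⟩
    · exact hh
    · exact hh.symm
  · intro hh
    refine ⟨fun he => H.ne_of_adj hh ?_, Or.inl hh⟩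
    exact congrArg Subtype.val (Sum.inr.inj he)

end Basics

namespace STree

lemma not_treeAdj_root_left (s : STree) (u : s.NodeType) : ¬ s.treeAdj s.root u := by
  cases s with
  | leaf => exact fun h => h
  | node ι c g => rcases u with v | ⟨j, w⟩ <;> exact fun h => h

lemma not_treeAdj_root_right (s : STree) (u : s.NodeType) : ¬ s.treeAdj u s.root := by
  cases s with
  | leaf => exact fun h => h
  | node ι c g => rcases u with v | ⟨j, w⟩ <;> exact fun h => h

lemma onBranch_root (s : STree) (b : s.Branch) : s.onBranch b s.root := by
  cases s with
  | leaf => exact trivial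
  | node ι c g => obtain ⟨i, b⟩ := b; exact trivial

lemma realization_adj_root_branch (s : STree) (b : s.Branch) :
    s.realization.Adj (Sum.inl s.root) (Sum.inr b) :=
  ⟨by simp, Or.inl (onBranch_root s b)⟩

lemma not_realization_adj_root_node (s : STree) (u : s.NodeType) :
    ¬ s.realization.Adj (Sum.inl s.root) (Sum.inl u) := by
  rintro ⟨_, h | h⟩
  · exact not_treeAdj_root_left s u h
  · exact not_treeAdj_root_right s u h

end STree

section NodeCase

open STree

variable {ι : Type} (c : ι → STree) (g : SimpleGraph ι)

/-- Vertex of the realization of `node ι c g`: the root. -/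
abbrev vRoot : (STree.node ι c g).NodeType ⊕ (STree.node ι c g).Branch :=
  Sum.inl (Sum.inl PUnit.unit)

/-- Vertex of the realization of `node ι c g`: a node of the `j`-th subtree. -/
abbrev vNode (j : ι) (w : (c j).NodeType) :
    (STree.node ι c g).NodeType ⊕ (STree.node ι c g).Branch :=
  Sum.inl (Sum.inr ⟨j, w⟩)

/-- Vertex of the realization of `node ι c g`: a branch through the `j`-th subtree. -/
abbrev vBranch (j : ι) (b : (c j).Branch) :
    (STree.node ι c g).NodeType ⊕ (STree.node ι c g).Branch :=
  Sum.inr ⟨j, b⟩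

/-- Embedding of the vertices of the realization of the `i`-th subtree. -/
def emb (i : ι) : ((c i).NodeType ⊕ (c i).Branch) →
    ((STree.node ι c g).NodeType ⊕ (STree.node ι c g).Branch)
  | Sum.inl u => vNode c g i u
  | Sum.inr b => vBranch c g i b

lemma treeAdj_node_same {i : ι} {u v : (c i).NodeType} :
    (STree.node ι c g).treeAdj (Sum.inr ⟨i, u⟩) (Sum.inr ⟨i, v⟩) ↔ (c i).treeAdj u v := by
  constructor
  · rintro (⟨h, hh⟩ | ⟨hgi, -, -⟩)
    · exact hh
    · exact (g.irrefl hgi).elim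
  · exact fun h => Or.inl ⟨rfl, h⟩

lemma treeAdj_node_ne {i j : ι} (hij : i ≠ j) {u : (c i).NodeType} {v : (c j).NodeType} :
    (STree.node ι c g).treeAdj (Sum.inr ⟨i, u⟩) (Sum.inr ⟨j, v⟩) ↔
      g.Adj i j ∧ u = (c i).root ∧ v = (c j).root := by
  constructor
  · rintro (⟨h, -⟩ | hh)
    · exact (hij h).elim
    · exact hh
  · exact Or.inr

lemma not_treeAdj_node_inl_left {u : PUnit} (x : (STree.node ι c g).NodeType) :
    ¬ (STree.node ι c g).treeAdj (Sum.inl u) x := by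
  rcases x with v | ⟨j, w⟩ <;> exact fun h => h

lemma not_treeAdj_node_inl_right {u : PUnit} (x : (STree.node ι c g).NodeType) :
    ¬ (STree.node ι c g).treeAdj x (Sum.inl u) := by
  rcases x with v | ⟨j, w⟩ <;> exact fun h => h

lemma onBranch_node_inr_same {i : ι} {b : (c i).Branch} {w : (c i).NodeType} :
    (STree.node ι c g).onBranch ⟨i, b⟩ (Sum.inr ⟨i, w⟩) ↔ (c i).onBranch b w :=
  ⟨fun ⟨_, h⟩ => h, fun h => ⟨rfl, h⟩⟩

lemma onBranch_node_inr_ne {i j : ι} (hij : j ≠ i) {b : (c i).Branch} {w : (c j).NodeType} :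
    ¬ (STree.node ι c g).onBranch ⟨i, b⟩ (Sum.inr ⟨j, w⟩) :=
  fun ⟨h, _⟩ => hij h

/-- The partial realization: only the root, the children roots, and the
subtrees indexed by `A` are present. -/
def okSet (A : Set ι) : Set ((STree.node ι c g).NodeType ⊕ (STree.node ι c g).Branch) :=
  fun x =>
    match x with
    | Sum.inl (Sum.inl _) => True
    | Sum.inl (Sum.inr ⟨j, w⟩) => j ∈ A ∨ w = (c j).root
    | Sum.inr ⟨j, _⟩ => j ∈ A

lemma okSet_mono {A B : Set ι} (hAB : A ⊆ B) : okSet c g A ⊆ okSet c g B := by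
  rintro ((u | ⟨j, w⟩) | ⟨j, b⟩) hx
  · exact trivial
  · exact hx.imp (fun h => hAB h) id
  · exact hAB hx

end NodeCase

section NodeCase2

open STree

variable {ι : Type} (c : ι → STree) (g : SimpleGraph ι)

@[simp] lemma nodeType_node_eq :
    (STree.node ι c g).NodeType = (PUnit ⊕ Σ i : ι, (c i).NodeType) := rfl

@[simp] lemma branch_node_eq :
    (STree.node ι c g).Branch = (Σ i : ι, (c i).Branch) := rfl

@[simp] lemma vNode_inj {i : ι} {u v : (c i).NodeType} :
    vNode c g i u = vNode c g i v ↔ u = v := by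
  constructor
  · intro h
    exact eq_of_heq (Sigma.mk.inj_iff.mp (Sum.inr.inj (Sum.inl.inj h))).2
  · rintro rfl; rfl

@[simp] lemma vBranch_inj {i : ι} {b b' : (c i).Branch} :
    vBranch c g i b = vBranch c g i b' ↔ b = b' := by
  constructor
  · intro h
    exact eq_of_heq (Sigma.mk.inj_iff.mp (Sum.inr.inj h)).2
  · rintro rfl; rfl

lemma vNode_ne_of_ne {i j : ι} (hij : i ≠ j) (u : (c i).NodeType) (w : (c j).NodeType) :
    vNode c g i u ≠ vNode c g j w :=
  fun h => hij (congrArg Sigma.fst (Sum.inr.inj (Sum.inl.inj h)))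

/-- Realization adjacency within one subtree. -/
lemma adj_emb (i : ι) (x y : (c i).NodeType ⊕ (c i).Branch) :
    (STree.node ι c g).realization.Adj (emb c g i x) (emb c g i y) ↔
      (c i).realization.Adj x y := by
  cases x <;> cases y <;>
    simp [emb, vNode, vBranch, STree.realization, treeAdj_node_same c g, onBranch_node_inr_same c g]

/-- The second glue map, into the replicated subtree realization. -/
def hmap (i : ι) : Bool → ((c i).NodeType ⊕ (c i).Branch) ⊕ Unit
  | true => Sum.inr ()
  | false => Sum.inl (Sum.inl (c i).root)

/-- The first glue map, into the partial realization. -/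
def fmap (A : Set ι) (i : ι) : Bool → ↥(okSet c g A)
  | true => ⟨vRoot c g, True.intro⟩
  | false => ⟨vNode c g i (c i).root, Or.inr rfl⟩

/-- The vertex map for the step isomorphism. -/
def stepFun (A : Set ι) (i : ι) :
    (↥(okSet c g A) ⊕ {w : ((c i).NodeType ⊕ (c i).Branch) ⊕ Unit // w ∉ Set.range (hmap c i)}) →
    ↥(okSet c g (insert i A))
  | Sum.inl ⟨x, hx⟩ => ⟨x, okSet_mono c g (Set.subset_insert i A) hx⟩
  | Sum.inr ⟨Sum.inl (Sum.inl u), _⟩ => ⟨vNode c g i u, Or.inl (Set.mem_insert i A)⟩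
  | Sum.inr ⟨Sum.inl (Sum.inr b), _⟩ => ⟨vBranch c g i b, Set.mem_insert i A⟩
  | Sum.inr ⟨Sum.inr _, hw⟩ => absurd ⟨true, rfl⟩ hw

lemma stepFun_bijective (A : Set ι) (i : ι) (hi : i ∉ A) :
    Function.Bijective (stepFun c g A i) := by
  constructor
  · rintro (⟨x, hx⟩ | ⟨(u | b) | u, hw⟩) (⟨y, hy⟩ | ⟨(u' | b') | u', hw'⟩) hxy <;>
      simp only [stepFun, Subtype.mk.injEq] at hxy
    · subst hxy; rfl
    · -- inl vs inr node
      obtain rfl : x = _ := congrArg Subtype.val hxy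
      rcases (hx : i ∈ A ∨ u' = (c i).root) with h | h
      · exact absurd h hi
      · exact absurd ⟨false, by simp [hmap, h]⟩ hw'
    · -- inl vs inr branch
      obtain rfl : x = _ := congrArg Subtype.val hxy
      exact absurd (hx : i ∈ A) hi
    · exact absurd ⟨true, rfl⟩ hw'
    · -- inr node vs inl
      obtain rfl : _ = y := congrArg Subtype.val hxy
      rcases (hy : i ∈ A ∨ u = (c i).root) with h | h
      · exact absurd h hi
      · exact absurd ⟨false, by simp [hmap, h]⟩ hw
    · -- inr node vs inr node
      replace hxy := (vNode_inj c g).mp (congrArg Subtype.val hxy)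
      subst hxy; rfl
    · simp [vNode, vBranch] at hxy
    · exact absurd ⟨true, rfl⟩ hw'
    · -- inr branch vs inl
      obtain rfl : _ = y := congrArg Subtype.val hxy
      exact absurd (hy : i ∈ A) hi
    · simp [vNode, vBranch] at hxy
    · -- inr branch vs inr branch
      replace hxy := (vBranch_inj c g).mp (congrArg Subtype.val hxy)
      subst hxy; rfl
    · exact absurd ⟨true, rfl⟩ hw'
    · exact absurd ⟨true, rfl⟩ hw
    · exact absurd ⟨true, rfl⟩ hw
    · exact absurd ⟨true, rfl⟩ hw
    · exact absurd ⟨true, rfl⟩ hw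
  · rintro ⟨(u | ⟨j, w⟩) | ⟨j, b⟩, hx⟩
    · exact ⟨Sum.inl ⟨Sum.inl (Sum.inl u), True.intro⟩, rfl⟩
    · by_cases hji : j = i
      · subst hji
        by_cases hw : w = (c j).root
        · subst hw
          exact ⟨Sum.inl ⟨vNode c g j (c j).root, Or.inr rfl⟩, rfl⟩
        · refine ⟨Sum.inr ⟨Sum.inl (Sum.inl w), ?_⟩, rfl⟩
          rintro ⟨s, hs⟩
          cases s
          · simp only [hmap] at hs
            exact hw (Sum.inl.inj (Sum.inl.inj hs)).symm
          · simp [hmap] at hs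
      · refine ⟨Sum.inl ⟨vNode c g j w, ?_⟩, rfl⟩
        rcases (hx : j ∈ insert i A ∨ w = (c j).root) with h | h
        · exact Or.inl ((Set.mem_insert_iff.mp h).resolve_left hji)
        · exact Or.inr h
    · by_cases hji : j = i
      · subst hji
        refine ⟨Sum.inr ⟨Sum.inl (Sum.inr b), ?_⟩, rfl⟩
        rintro ⟨s, hs⟩
        cases s <;> simp [hmap] at hs
      · refine ⟨Sum.inl ⟨vBranch c g j b, ?_⟩, rfl⟩
        exact (Set.mem_insert_iff.mp (hx : j ∈ insert i A)).resolve_left hji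

end NodeCase2

section NodeCase3

open STree SimpleGraph

variable {ι : Type} (c : ι → STree) (g : SimpleGraph ι)

lemma not_adj_vRoot_vNode (j : ι) (w : (c j).NodeType) :
    ¬ (STree.node ι c g).realization.Adj (vRoot c g) (vNode c g j w) := by
  rintro ⟨-, h | h⟩
  · exact not_treeAdj_node_inl_left c g _ h
  · exact not_treeAdj_node_inl_right c g _ h

lemma adj_vRoot_vBranch (j : ι) (b : (c j).Branch) :
    (STree.node ι c g).realization.Adj (vRoot c g) (vBranch c g j b) :=
  ⟨Sum.inl_ne_inr, Or.inl True.intro⟩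

lemma not_adj_okA_newnode {A : Set ι} {i : ι} (hi : i ∉ A)
    {x : (STree.node ι c g).NodeType ⊕ (STree.node ι c g).Branch} (hx : x ∈ okSet c g A)
    {u : (c i).NodeType} (hu : u ≠ (c i).root) :
    ¬ (STree.node ι c g).realization.Adj x (vNode c g i u) := by
  intro hadj
  rcases x with (u0 | ⟨j, w⟩) | ⟨j, b0⟩
  · exact not_adj_vRoot_vNode c g i u hadj
  · rcases hadj with ⟨hne, hh | hh⟩
    · by_cases hji : j = i
      · subst hji
        have h1 := (treeAdj_node_same c g).mp hh
        rcases (hx : j ∈ A ∨ w = (c j).root) with h | h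
        · exact hi h
        · subst h
          exact not_treeAdj_root_left (c j) u h1
      · obtain ⟨-, -, hur⟩ := (treeAdj_node_ne c g hji).mp hh
        exact hu hur
    · by_cases hji : i = j
      · subst hji
        have h1 := (treeAdj_node_same c g).mp hh
        rcases (hx : i ∈ A ∨ w = (c i).root) with h | h
        · exact hi h
        · subst h
          exact not_treeAdj_root_right (c i) u h1
      · obtain ⟨-, hur, -⟩ := (treeAdj_node_ne c g hji).mp hh
        exact hu hur
  · have hij : i ≠ j := by
      rintro rfl
      exact hi (hx : i ∈ A)
    rcases hadj with ⟨-, hh | hh⟩ <;> exact onBranch_node_inr_ne c g hij hh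

lemma adj_okA_newbranch {A : Set ι} {i : ι} (hi : i ∉ A)
    {x : (STree.node ι c g).NodeType ⊕ (STree.node ι c g).Branch} (hx : x ∈ okSet c g A)
    {bb : (c i).Branch} :
    (STree.node ι c g).realization.Adj x (vBranch c g i bb) ↔
      (x = vRoot c g ∨ x = vNode c g i (c i).root) := by
  constructor
  · intro hadj
    rcases x with (u0 | ⟨j, w⟩) | ⟨j, b0⟩
    · exact Or.inl rfl
    · rcases hadj with ⟨-, hh | hh⟩ <;>
      · obtain ⟨hji, -⟩ := hh
        subst hji
        rcases (hx : j ∈ A ∨ w = (c j).root) with h | h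
        · exact absurd h hi
        · subst h
          exact Or.inr rfl
    · rcases hadj with ⟨-, hh | hh⟩ <;> exact hh.elim
  · rintro (rfl | rfl)
    · exact adj_vRoot_vBranch c g i bb
    · exact ⟨Sum.inl_ne_inr, Or.inl ⟨rfl, onBranch_root (c i) bb⟩⟩

lemma step_mem {A : Set ι} {i : ι} (hi : i ∉ A)
    (hA : InC (↥(okSet c g A)) ((STree.node ι c g).realization.induce (okSet c g A)))
    (hci : InC ((c i).NodeType ⊕ (c i).Branch) ((c i).realization)) :
    InC (↥(okSet c g (insert i A)))
      ((STree.node ι c g).realization.induce (okSet c g (insert i A))) := by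
  have hH := InC.replicate _ _ (Sum.inl (c i).root) hci
  have hHnode : ∀ (s : Bool) (u : (c i).NodeType),
      ¬ (replicateGraph (c i).realization (Sum.inl (c i).root)).Adj
          (hmap c i s) (Sum.inl (Sum.inl u)) := by
    intro s u h
    cases s
    · exact not_realization_adj_root_node (c i) u (repl_adj_inl_inl.mp h)
    · exact not_realization_adj_root_node (c i) u (repl_adj_inr_inl.mp h)
  have hHbranch : ∀ (s : Bool) (b : (c i).Branch),
      (replicateGraph (c i).realization (Sum.inl (c i).root)).Adj
          (hmap c i s) (Sum.inl (Sum.inr b)) := by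
    intro s b
    cases s
    · exact repl_adj_inl_inl.mpr (realization_adj_root_branch (c i) b)
    · exact repl_adj_inr_inl.mpr (realization_adj_root_branch (c i) b)
  refine InC.iso _ _ _ _
    (InC.glue _ _ Bool _ _ (fmap c g A i) (hmap c i) hA hH ?_ ?_ ?_ ?_ ?_ ?_)
    ⟨⟨Equiv.ofBijective _ (stepFun_bijective c g A i hi), ?_⟩⟩
  · -- fmap injective
    intro s s' h
    cases s <;> cases s' <;>
      first
        | rfl
        | (exfalso; simp [fmap, vRoot, vNode, Subtype.mk.injEq] at h)
  · -- hmap injective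
    intro s s' h
    cases s <;> cases s' <;>
      first
        | rfl
        | (exfalso; simp [hmap] at h)
  · exact inferInstance
  · simp [Nat.card_eq_fintype_card]
  · -- independence in the partial realization
    intro s s' h
    have h' : (STree.node ι c g).realization.Adj
        ((fmap c g A i s) : _) ((fmap c g A i s') : _) := h
    cases s <;> cases s'
    · exact (STree.node ι c g).realization.irrefl h'
    · exact not_adj_vRoot_vNode c g i (c i).root h'.symm
    · exact not_adj_vRoot_vNode c g i (c i).root h'
    · exact (STree.node ι c g).realization.irrefl h'
  · -- independence in the replicated subtree
    intro s s' h
    cases s <;> cases s'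
    · exact (replicateGraph _ _).irrefl h
    · exact (c i).realization.irrefl (repl_adj_inl_inr.mp h)
    · exact (c i).realization.irrefl (repl_adj_inr_inl.mp h)
    · exact (replicateGraph _ _).irrefl h
  · -- the isomorphism property
    intro a b
    rcases a with ⟨x, hx⟩ | ⟨(u | bb) | uu, hw⟩ <;>
      rcases b with ⟨y, hy⟩ | ⟨(u' | bb') | uu', hw'⟩
    · rw [glue_adj_inl_inl]
      exact Iff.rfl
    · have hu' : u' ≠ (c i).root := fun hh => hw' ⟨false, by simp [hmap, hh]⟩
      rw [glue_adj_inl_inr]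
      refine iff_of_false ?_ ?_
      · exact fun hadj => not_adj_okA_newnode c g hi hx hu' hadj
      · rintro ⟨s, -, hadj⟩
        exact hHnode s u' hadj
    · rw [glue_adj_inl_inr]
      constructor
      · intro hadj
        rcases (adj_okA_newbranch c g hi hx).mp hadj with h | h
        · exact ⟨true, Subtype.ext h.symm, hHbranch true bb'⟩
        · exact ⟨false, Subtype.ext h.symm, hHbranch false bb'⟩
      · rintro ⟨s, hs, -⟩
        refine (adj_okA_newbranch c g hi hx).mpr ?_
        cases s
        · exact Or.inr (congrArg Subtype.val hs).symm
        · exact Or.inl (congrArg Subtype.val hs).symm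
    · exact absurd ⟨true, rfl⟩ hw'
    · -- new node vs old
      have hu : u ≠ (c i).root := fun hh => hw ⟨false, by simp [hmap, hh]⟩
      rw [glue_adj_inr_inl, SimpleGraph.adj_comm]
      refine iff_of_false ?_ ?_
      · exact fun hadj => not_adj_okA_newnode c g hi hy hu hadj
      · rintro ⟨s, -, hadj⟩
        exact hHnode s u hadj
    · rw [glue_adj_inr_inr, repl_adj_inl_inl]
      exact adj_emb c g i (Sum.inl u) (Sum.inl u')
    · rw [glue_adj_inr_inr, repl_adj_inl_inl]
      exact adj_emb c g i (Sum.inl u) (Sum.inr bb')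
    · exact absurd ⟨true, rfl⟩ hw'
    · -- new branch vs old
      rw [glue_adj_inr_inl, SimpleGraph.adj_comm]
      constructor
      · intro hadj
        rcases (adj_okA_newbranch c g hi hy).mp hadj with h | h
        · exact ⟨true, Subtype.ext h.symm, hHbranch true bb⟩
        · exact ⟨false, Subtype.ext h.symm, hHbranch false bb⟩
      · rintro ⟨s, hs, -⟩
        refine (adj_okA_newbranch c g hi hy).mpr ?_
        cases s
        · exact Or.inr (congrArg Subtype.val hs).symm
        · exact Or.inl (congrArg Subtype.val hs).symm
    · rw [glue_adj_inr_inr, repl_adj_inl_inl]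
      exact adj_emb c g i (Sum.inr bb) (Sum.inl u')
    · rw [glue_adj_inr_inr, repl_adj_inl_inl]
      exact adj_emb c g i (Sum.inr bb) (Sum.inr bb')
    · exact absurd ⟨true, rfl⟩ hw'
    · exact absurd ⟨true, rfl⟩ hw
    · exact absurd ⟨true, rfl⟩ hw
    · exact absurd ⟨true, rfl⟩ hw
    · exact absurd ⟨true, rfl⟩ hw

/-- The vertex map for the base isomorphism. -/
def baseFun : (ι ⊕ {b : Bool // b ∉ Set.range (fun _ : Unit => false)}) →
    ↥(okSet c g (∅ : Set ι))
  | Sum.inl j => ⟨vNode c g j (c j).root, Or.inr rfl⟩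
  | Sum.inr _ => ⟨vRoot c g, True.intro⟩

lemma base_mem (hgC : InC ι g) :
    InC (↥(okSet c g (∅ : Set ι)))
      ((STree.node ι c g).realization.induce (okSet c g (∅ : Set ι))) := by
  rcases isEmpty_or_nonempty ι with hempty | hne
  · haveI : Subsingleton (↥(okSet c g (∅ : Set ι))) := by
      constructor
      rintro ⟨x, hx⟩ ⟨y, hy⟩
      rcases x with (u | ⟨j, w⟩) | ⟨j, b⟩
      · rcases y with (u' | ⟨j', w'⟩) | ⟨j', b'⟩
        · rfl
        · exact (hempty.false j').elim
        · exact (hempty.false j').elim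
      · exact (hempty.false j).elim
      · exact (hempty.false j).elim
    haveI : Finite (↥(okSet c g (∅ : Set ι))) := Finite.of_subsingleton
    exact InC.small _ _ inferInstance
      ((Finite.card_le_one_iff_subsingleton.mpr inferInstance).trans one_le_two)
  · obtain ⟨i0⟩ := hne
    have h2 : InC Bool ⊥ := InC.small _ _ inferInstance (by simp [Nat.card_eq_fintype_card])
    have hbij : Function.Bijective (baseFun c g) := by
      constructor
      · rintro (j | w) (k | w') h <;> simp only [baseFun, Subtype.mk.injEq] at h
        · have hjk := congrArg Sigma.fst (Sum.inr.inj (Sum.inl.inj (congrArg Subtype.val h)))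
          exact congrArg Sum.inl hjk
        · exact absurd h (by simp [vNode, vRoot])
        · exact absurd h (by simp [vNode, vRoot])
        · have hval : ∀ z : {b : Bool // b ∉ Set.range (fun _ : Unit => false)},
              z.val = true := by
            rintro ⟨z, hz⟩
            cases z
            · exact absurd ⟨(), rfl⟩ hz
            · rfl
          exact congrArg Sum.inr (Subtype.ext ((hval w).trans (hval w').symm))
      · rintro ⟨(u | ⟨j, w⟩) | ⟨j, b⟩, hx⟩
        · refine ⟨Sum.inr ⟨true, ?_⟩, rfl⟩
          rintro ⟨s, hs⟩
          simp at hs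
        · rcases (hx : j ∈ (∅ : Set ι) ∨ w = (c j).root) with h | h
          · exact absurd h (Set.notMem_empty j)
          · subst h
            exact ⟨Sum.inl j, rfl⟩
        · exact absurd (hx : j ∈ (∅ : Set ι)) (Set.notMem_empty j)
    refine InC.iso _ _ _ _
      (InC.glue ι Bool Unit g ⊥ (fun _ => i0) (fun _ => false) hgC h2
        (fun a b _ => Subsingleton.elim a b) (fun a b _ => Subsingleton.elim a b)
        inferInstance (by simp [Nat.card_eq_fintype_card])
        (fun s s' => g.irrefl) (fun s s' h => h.ne rfl))
      ⟨⟨Equiv.ofBijective _ hbij, ?_⟩⟩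
    intro a b
    rcases a with j | w <;> rcases b with k | w'
    · rw [glue_adj_inl_inl]
      show (STree.node ι c g).realization.Adj
        (vNode c g j (c j).root) (vNode c g k (c k).root) ↔ g.Adj j k
      constructor
      · rintro ⟨hne', hh | hh⟩
        · by_cases hjk : j = k
          · subst hjk; exact absurd rfl hne'
          · exact ((treeAdj_node_ne c g hjk).mp hh).1
        · by_cases hjk : k = j
          · subst hjk; exact absurd rfl hne'
          · exact ((treeAdj_node_ne c g hjk).mp hh).1.symm
      · intro hadj
        exact ⟨vNode_ne_of_ne c g (g.ne_of_adj hadj) _ _,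
          Or.inl ((treeAdj_node_ne c g (g.ne_of_adj hadj)).mpr ⟨hadj, rfl, rfl⟩)⟩
    · rw [glue_adj_inl_inr]
      refine iff_of_false ?_ ?_
      · intro h
        exact not_adj_vRoot_vNode c g j (c j).root h.symm
      · rintro ⟨s, -, hs⟩
        exact hs
    · rw [glue_adj_inr_inl]
      refine iff_of_false ?_ ?_
      · intro h
        exact not_adj_vRoot_vNode c g k (c k).root h
      · rintro ⟨s, -, hs⟩
        exact hs
    · rw [glue_adj_inr_inr]
      exact iff_of_false (fun h => ((STree.node ι c g).realization.induce _).irrefl h)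
        (fun hs => hs)

lemma node_mem (hgC : InC ι g)
    (hc : ∀ i, InC ((c i).NodeType ⊕ (c i).Branch) ((c i).realization)) :
    InC ((STree.node ι c g).NodeType ⊕ (STree.node ι c g).Branch)
      ((STree.node ι c g).realization) := by
  haveI : Finite ι := InC_finite hgC
  have huniv : InC _ ((STree.node ι c g).realization.induce (okSet c g Set.univ)) := by
    refine Set.Finite.induction_on (motive := fun s _ => InC (↥(okSet c g s)) ((STree.node ι c g).realization.induce (okSet c g s))) Set.univ Set.finite_univ (base_mem c g hgC) ?_
    intro a s ha _ hIH
    exact step_mem c g ha hIH (hc a)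
  have hok : okSet c g Set.univ = Set.univ := by
    ext x
    rcases x with (u | ⟨j, w⟩) | ⟨j, b⟩
    · exact iff_of_true True.intro trivial
    · exact iff_of_true (Or.inl trivial) trivial
    · exact iff_of_true trivial trivial
  rw [hok] at huniv
  exact InC.iso _ _ _ _ huniv ⟨SimpleGraph.induceUnivIso _⟩

end NodeCase3

/-- if every graph attached to an internal node of a structured
tree `(T, g)` belongs to `𝒞`, then the realization `R(T,g)` belongs to `𝒞`. -/
theorem realization_mem_C (t : STree)
    (hg : ∀ p : Σ ι : Type, SimpleGraph ι, t.IsInternalGraphOf p → InC p.1 p.2) :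
    InC (t.NodeType ⊕ t.Branch) t.realization := by
  revert hg
  induction t with
  | leaf =>
    intro hg
    refine InC.small _ _ ?_ ?_
    · exact inferInstanceAs (Finite (PUnit ⊕ PUnit))
    · show Nat.card (PUnit ⊕ PUnit) ≤ 2
      simp [Nat.card_eq_fintype_card]
  | node ι c g ih =>
    intro hg
    have hgC : InC ι g := hg ⟨ι, g⟩ (STree.IsInternalGraphOf.here ι c g)
    refine node_mem c g hgC ?_
    intro i
    exact ih i (fun p hp => hg p (STree.IsInternalGraphOf.child ι c g i p hp))
end
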